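/- Let f : G → G' be a homomorphism of simplicial groups (a morphism of simplicial objects in the category of groups). For each q define the Moore chain subgroup N_q G = ⋂_{i=1}^{q} ker(d_i : G_q → G_{q-1}) (with N_0 G = G_0). Then f_q : G_q → G'_q is surjective for all q if and only if f_q(N_q G) = N_q G' for all q. -/

import Mathlib

open CategoryTheory

/-- The `q`-th Moore chain subgroup of a simplicial group `G`:
the intersection `⋂_{i=1}^{q} ker(dᵢ : G_q → G_{q-1})`, with `N_0 G = G_0`. -/
def MooreChains (G : SimplicialObject GrpCat) :
    (q : ℕ) → Subgroup (G.obj (Opposite.op (SimplexCategory.mk q)))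
  | 0 => ⊤
  | (q + 1) => ⨅ i : Fin (q + 1), MonoidHom.ker (G.δ i.succ).hom

namespace MooreAux

open Opposite Simplicial

lemma mem_mooreChains_succ (G : SimplicialObject GrpCat) (q : ℕ) (x : G.obj (op ⦋q+1⦌)) :
    x ∈ MooreChains G (q+1) ↔ ∀ i : Fin (q+1), G.δ i.succ x = 1 := by
  simp [MooreChains, Subgroup.mem_iInf, MonoidHom.mem_ker]

lemma nat_δ (G G' : SimplicialObject GrpCat) (f : G ⟶ G') (q : ℕ) (i : Fin (q+2))
    (x : G.obj (op ⦋q+1⦌)) :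
    f.app (op ⦋q⦌) (G.δ i x) = G'.δ i (f.app (op ⦋q+1⦌) x) := by
  have h := SimplicialObject.δ_naturality f i
  have := ConcreteCategory.congr_hom h x
  simp only [CategoryTheory.comp_apply] at this
  exact this

lemma nat_σ (G G' : SimplicialObject GrpCat) (f : G ⟶ G') (q : ℕ) (i : Fin (q+1))
    (x : G.obj (op ⦋q⦌)) :
    f.app (op ⦋q+1⦌) (G.σ i x) = G'.σ i (f.app (op ⦋q⦌) x) := by
  have h := SimplicialObject.σ_naturality f i
  have := ConcreteCategory.congr_hom h x
  simp only [CategoryTheory.comp_apply] at this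
  exact this

lemma gt_kill (H : SimplicialObject GrpCat) (q₀ : ℕ) (jf i : Fin (q₀+2)) (hlt : jf < i)
    (x : H.obj (op ⦋q₀+2⦌)) (hx : H.δ i.succ x = 1) :
    H.δ i.succ ((H.σ jf) ((H.δ jf.succ) x)) = 1 := by
  have h1 : jf.succ < i.succ := by simpa using hlt
  have hgt := SimplicialObject.δ_comp_σ_of_gt' (X := H) (i := i.succ) (j := jf) h1
  have e1 := ConcreteCategory.congr_hom hgt ((H.δ jf.succ) x)
  simp only [CategoryTheory.comp_apply, Fin.pred_succ] at e1
  rw [e1]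
  have hi0 : (jf : ℕ) + 1 < q₀ + 2 := by omega
  have hδδ := SimplicialObject.δ_comp_δ (X := H) (i := ⟨(jf : ℕ) + 1, hi0⟩) (j := i)
    (by simp [Fin.le_def]; omega)
  have e2 := ConcreteCategory.congr_hom hδδ x
  simp only [CategoryTheory.comp_apply] at e2
  have hcs : Fin.castSucc (⟨(jf : ℕ) + 1, hi0⟩ : Fin (q₀+2)) = jf.succ := by
    ext; simp
  rw [hcs] at e2
  rw [← e2, hx]
  show (H.σ _) ((H.δ _) 1) = 1
  rw [map_one, map_one]

/-- faces `δ_i` with `i ≥ k` kill `x`. -/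
def Killed (H : SimplicialObject GrpCat) (q : ℕ) (x : H.obj (op ⦋q+1⦌)) (k : ℕ) : Prop :=
  ∀ i : Fin (q+1), k ≤ (i : ℕ) + 1 → H.δ i.succ x = 1

lemma eq_succ_kill (H : SimplicialObject GrpCat) (q : ℕ) (jf : Fin (q+1))
    (x : H.obj (op ⦋q+1⦌)) :
    H.δ jf.succ ((H.σ jf) ((H.δ jf.succ) x)) = H.δ jf.succ x := by
  have hid := SimplicialObject.δ_comp_σ_succ (X := H) (i := jf)
  have := ConcreteCategory.congr_hom hid ((H.δ jf.succ) x)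
  simpa [CategoryTheory.comp_apply] using this

lemma killed_corr (H : SimplicialObject GrpCat) (q k : ℕ) (x : H.obj (op ⦋q+1⦌))
    (hk1 : 1 ≤ k) (hk2 : k ≤ q+1) (h : Killed H q x (k+1)) :
    Killed H q (x * ((H.σ ⟨k-1, by omega⟩)
      ((H.δ (⟨k-1, by omega⟩ : Fin (q+1)).succ) x))⁻¹) k := by
  set jf : Fin (q+1) := ⟨k-1, by omega⟩ with hjf
  intro i hi
  rw [map_mul, map_inv]
  rcases eq_or_lt_of_le (show jf ≤ i by simp only [hjf, Fin.le_def]; omega) with heq | hlt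
  · subst heq
    rw [eq_succ_kill, mul_inv_cancel]
  · have hxi : H.δ i.succ x = 1 := h i (by simp only [hjf, Fin.lt_def] at hlt; omega)
    have hq : 1 ≤ q := by
      have h1 : (jf : ℕ) < (i : ℕ) := hlt
      have h2 := i.isLt
      omega
    obtain ⟨q₀, rfl⟩ : ∃ q₀, q = q₀ + 1 := ⟨q - 1, by omega⟩
    rw [gt_kill H q₀ jf i hlt x hxi, hxi, inv_one, one_mul]

end MooreAux

namespace MooreAux

open Opposite Simplicial

lemma forward_aux (G G' : SimplicialObject GrpCat) (f : G ⟶ G') (q : ℕ) (k : ℕ) :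
    ∀ x : G.obj (op ⦋q+1⦌), Killed G q x k →
      (∀ i : Fin (q+1), G'.δ i.succ (f.app (op ⦋q+1⦌) x) = 1) →
      ∃ y, (∀ i : Fin (q+1), G.δ i.succ y = 1) ∧
        f.app (op ⦋q+1⦌) y = f.app (op ⦋q+1⦌) x := by
  induction k with
  | zero => exact fun x hx hfx => ⟨x, fun i => hx i (by omega), rfl⟩
  | succ k ih =>
    intro x hx hfx
    by_cases hk : 1 ≤ k ∧ k ≤ q + 1
    · obtain ⟨hk1, hk2⟩ := hk
      set jf : Fin (q+1) := ⟨k-1, by omega⟩ with hjf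
      set x₂ := x * ((G.σ jf) ((G.δ jf.succ) x))⁻¹ with hx₂def
      have hx₂ : Killed G q x₂ k := killed_corr G q k x hk1 hk2 hx
      have hfx₂ : f.app (op ⦋q+1⦌) x₂ = f.app (op ⦋q+1⦌) x := by
        rw [hx₂def, map_mul, map_inv, nat_σ, nat_δ, hfx jf, map_one, inv_one, mul_one]
      obtain ⟨y, hy, hfy⟩ := ih x₂ hx₂ (by rw [hfx₂]; exact hfx)
      exact ⟨y, hy, by rw [hfy, hfx₂]⟩
    · exact ih x (fun i hi => hx i (by have := i.isLt; omega)) hfx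

lemma backward_aux (G G' : SimplicialObject GrpCat) (f : G ⟶ G') (q : ℕ)
    (hs : Function.Surjective (f.app (op ⦋q⦌)))
    (hN : Subgroup.map (f.app (op ⦋q+1⦌)).hom (MooreChains G (q+1)) = MooreChains G' (q+1))
    (k : ℕ) :
    ∀ x' : G'.obj (op ⦋q+1⦌), Killed G' q x' k →
      ∃ y, f.app (op ⦋q+1⦌) y = x' := by
  induction k with
  | zero =>
    intro x' hx'
    have hmem : x' ∈ MooreChains G' (q+1) :=
      (mem_mooreChains_succ G' q x').2 (fun i => hx' i (by omega))
    rw [← hN] at hmem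
    obtain ⟨y, -, hy⟩ := hmem
    exact ⟨y, hy⟩
  | succ k ih =>
    intro x' hx'
    by_cases hk : 1 ≤ k ∧ k ≤ q + 1
    · obtain ⟨hk1, hk2⟩ := hk
      set jf : Fin (q+1) := ⟨k-1, by omega⟩ with hjf
      obtain ⟨y₂, hy₂⟩ := ih (x' * ((G'.σ jf) ((G'.δ jf.succ) x'))⁻¹)
        (killed_corr G' q k x' hk1 hk2 hx')
      obtain ⟨z, hz⟩ := hs ((G'.δ jf.succ) x')
      refine ⟨y₂ * G.σ jf z, ?_⟩
      rw [map_mul, hy₂, nat_σ, hz, inv_mul_cancel_right]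
    · exact ih x' (fun i hi => hx' i (by have := i.isLt; omega))

end MooreAux

open MooreAux Opposite Simplicial in
/-- A morphism `f : G → G'` of simplicial groups is levelwise surjective if and only if it
maps the Moore chain subgroup `N_q G` onto `N_q G'` for all `q`. -/
theorem levelwise_surjective_iff_map_mooreChains
    (G G' : SimplicialObject GrpCat) (f : G ⟶ G') :
    (∀ q : ℕ, Function.Surjective (f.app (Opposite.op (SimplexCategory.mk q)))) ↔
      (∀ q : ℕ, Subgroup.map (f.app (Opposite.op (SimplexCategory.mk q))).hom
        (MooreChains G q) = MooreChains G' q) := by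
  constructor
  · intro hs q
    cases q with
    | zero =>
      show Subgroup.map (f.app (op ⦋0⦌)).hom ⊤ = ⊤
      rw [← MonoidHom.range_eq_map]
      exact MonoidHom.range_eq_top.2 (hs 0)
    | succ q =>
      apply le_antisymm
      · rintro _ ⟨x, hx, rfl⟩
        rw [mem_mooreChains_succ]
        intro i
        rw [← nat_δ, (mem_mooreChains_succ G q x).1 hx i, map_one]
      · intro x' hx'
        obtain ⟨x, hx⟩ := hs (q+1) x'
        have hfx : ∀ i : Fin (q+1), G'.δ i.succ (f.app (op ⦋q+1⦌) x) = 1 := fun i => by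
          rw [hx]; exact (mem_mooreChains_succ G' q x').1 hx' i
        obtain ⟨y, hy, hfy⟩ := forward_aux G G' f q (q+2) x
          (fun i hi => absurd hi (by have := i.isLt; omega)) hfx
        exact ⟨y, (mem_mooreChains_succ G q y).2 hy, by rw [hfy, hx]⟩
  · intro hN q
    induction q with
    | zero =>
      intro x'
      have h0 : Subgroup.map (f.app (op ⦋0⦌)).hom ⊤ = ⊤ := hN 0
      have : x' ∈ Subgroup.map (f.app (op ⦋0⦌)).hom ⊤ := h0.symm ▸ Subgroup.mem_top x'
      obtain ⟨y, -, hy⟩ := this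
      exact ⟨y, hy⟩
    | succ q ih =>
      intro x'
      exact backward_aux G G' f q ih (hN (q+1)) (q+2) x'
        (fun i hi => absurd hi (by have := i.isLt; omega))
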